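/- arXiv:2309.09171 — 3 statements merged into one kernel-verified Lean document; each statement's English description precedes it below -/
import Mathlib

section
/- For every complex number z with Re(z) > 0 and every real θ ∈ (0,1), the integral ∫₀¹ ρ(θ/x) x^{z-1} dx equals θ/(z-1) − θ^z ζ(z)/z, where ρ(t) = t − ⌊t⌋ is the fractional part function and ζ is the Riemann zeta function (analytically continued, with the θ/(z−1) term interpreted by continuity at z = 1). -/
open MeasureTheory Set Complex Real Filter

noncomputable def nbf (θ : ℝ) : ℝ → ℂ :=
  (Ioo (0:ℝ) 1).indicator (fun x => ((Int.fract (θ / x) : ℝ) : ℂ))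

lemma nbf_meas (θ : ℝ) : Measurable (nbf θ) :=
  (Complex.measurable_ofReal.comp ((measurable_const.div measurable_id).fract)).indicator
    measurableSet_Ioo

lemma nbf_norm_le (θ : ℝ) (x : ℝ) : ‖nbf θ x‖ ≤ 1 := by
  unfold nbf
  by_cases h : x ∈ Ioo (0:ℝ) 1
  · rw [indicator_of_mem h]
    rw [Complex.norm_real, Real.norm_eq_abs, _root_.abs_of_nonneg (Int.fract_nonneg (θ / x))]
    exact (Int.fract_lt_one _).le
  · rw [indicator_of_notMem h]; simp

lemma nbf_mellin (θ : ℝ) (z : ℂ) :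
    mellin (nbf θ) z
      = ∫ x in Ioo (0:ℝ) 1, ((Int.fract (θ / x) : ℝ) : ℂ) * (x : ℂ) ^ (z - 1) := by
  unfold mellin nbf
  rw [← integral_indicator (measurableSet_Ioo (a := (0:ℝ)) (b := 1))]
  rw [← integral_indicator (measurableSet_Ioi (a := (0:ℝ)))]
  congr 1
  ext x
  by_cases h : x ∈ Ioo (0:ℝ) 1
  · rw [indicator_of_mem h, indicator_of_mem (Ioo_subset_Ioi_self h), indicator_of_mem h,
      smul_eq_mul, mul_comm]
  · rw [indicator_of_notMem h]
    by_cases h' : x ∈ Ioi (0:ℝ)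
    · rw [indicator_of_mem h', indicator_of_notMem h, smul_zero]
    · rw [indicator_of_notMem h']

lemma nbf_integrable (θ : ℝ) : Integrable (nbf θ) := by
  refine Integrable.mono' (g := (Ioo (0:ℝ) 1).indicator (fun _ => (1:ℝ)))
    ((integrableOn_const (C := (1:ℝ)) measure_Ioo_lt_top.ne).integrable_indicator
      measurableSet_Ioo)
    (nbf_meas θ).aestronglyMeasurable ?_
  filter_upwards with x
  by_cases h : x ∈ Ioo (0:ℝ) 1
  · rw [indicator_of_mem h]; exact nbf_norm_le θ x
  · rw [indicator_of_notMem h]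
    unfold nbf; rw [indicator_of_notMem h]; simp

lemma nbf_mellin_diff (θ : ℝ) {s : ℂ} (hs : 0 < s.re) :
    DifferentiableAt ℂ (mellin (nbf θ)) s := by
  refine mellin_differentiableAt_of_isBigO_rpow (a := s.re + 1) (b := 0)
    ((nbf_integrable θ).locallyIntegrable.locallyIntegrableOn _)
    ?_ (by linarith) ?_ hs
  · apply Asymptotics.IsBigO.of_bound 1
    filter_upwards [eventually_ge_atTop (1:ℝ)] with x hx
    have : nbf θ x = 0 := indicator_of_notMem (by simp [hx.not_gt]) _
    rw [this, norm_zero]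
    positivity
  · apply Asymptotics.IsBigO.of_bound 1
    filter_upwards [self_mem_nhdsWithin] with x (hx : (0:ℝ) < x)
    rw [neg_zero, Real.rpow_zero, norm_one, mul_one]
    exact nbf_norm_le θ x

lemma floor_tsum_eq {θ x : ℝ} (hθ : θ ∈ Ioo (0:ℝ) 1) (hx : x ∈ Ioo (0:ℝ) 1) (z : ℂ) :
    ((⌊θ / x⌋₊ : ℕ) : ℂ) * (x : ℂ) ^ (z - 1)
      = ∑' n : ℕ, (Ioc (0:ℝ) (θ / (n + 1))).indicator (fun y : ℝ => (y : ℂ) ^ (z - 1)) x := by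
  have hx0 : 0 < x := hx.1
  have ht : 0 ≤ θ / x := le_of_lt (div_pos hθ.1 hx0)
  have key : ∀ n : ℕ, x ∈ Ioc (0:ℝ) (θ / (n + 1)) ↔ n < ⌊θ / x⌋₊ := by
    intro n
    rw [mem_Ioc, Nat.lt_iff_add_one_le, Nat.le_floor_iff ht]
    have hn1 : (0:ℝ) < (n:ℝ) + 1 := by positivity
    rw [le_div_iff₀ hn1, le_div_iff₀ hx0]
    constructor
    · rintro ⟨-, h⟩; push_cast; linarith [h]
    · intro h; refine ⟨hx0, ?_⟩; push_cast at h ⊢; linarith [h]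
  rw [tsum_eq_sum (s := Finset.range ⌊θ / x⌋₊) ?_]
  · rw [Finset.sum_congr rfl (fun n hn => indicator_of_mem
      ((key n).mpr (Finset.mem_range.mp hn)) _), Finset.sum_const, Finset.card_range,
      nsmul_eq_mul]
  · intro n hn
    exact indicator_of_notMem (fun hmem => hn (Finset.mem_range.mpr ((key n).mp hmem))) _

lemma fract_decomp {θ x : ℝ} (hθ : θ ∈ Ioo (0:ℝ) 1) (hx : x ∈ Ioo (0:ℝ) 1) (z : ℂ) :
    ((Int.fract (θ / x) : ℝ) : ℂ) * (x : ℂ) ^ (z - 1)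
      = (θ : ℂ) * (x : ℂ) ^ (z - 2) - ((⌊θ / x⌋₊ : ℕ) : ℂ) * (x : ℂ) ^ (z - 1) := by
  have hx0 : 0 < x := hx.1
  have hxC : (x:ℂ) ≠ 0 := by exact_mod_cast hx0.ne'
  have ht : 0 ≤ θ / x := le_of_lt (div_pos hθ.1 hx0)
  have h1 : Int.fract (θ / x) = θ / x - (⌊θ / x⌋₊ : ℝ) := by
    rw [← Int.self_sub_floor, ← Int.natCast_floor_eq_floor ht]
    push_cast
    ring
  have h2 : (x : ℂ) ^ (z - 1) = (x : ℂ) ^ (z - 2) * x := by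
    rw [show z - 1 = z - 2 + 1 by ring, Complex.cpow_add _ _ hxC, Complex.cpow_one]
  rw [h1]
  push_cast
  rw [sub_mul, h2]
  field_simp

lemma cpow_integrableOn {z : ℂ} (hz : 0 < z.re) {c : ℝ} (hc : 0 ≤ c) :
    IntegrableOn (fun y : ℝ => (y : ℂ) ^ (z - 1)) (Ioc 0 c) := by
  have h1 : -1 < (z - 1).re := by simp [Complex.sub_re]; linarith
  exact (intervalIntegrable_iff_integrableOn_Ioc_of_le hc).mp (intervalIntegral.intervalIntegrable_cpow' h1)

lemma cpow_int_Ioc {z : ℂ} (hz : 0 < z.re) {c : ℝ} (hc : 0 < c) :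
    ∫ y in Ioc (0:ℝ) c, (y : ℂ) ^ (z - 1) = (c : ℂ) ^ z / z := by
  have h1 : -1 < (z - 1).re := by simp [Complex.sub_re]; linarith
  have hz0 : z ≠ 0 := fun h => by simp [h] at hz
  rw [← intervalIntegral.integral_of_le hc.le, integral_cpow (Or.inl h1), sub_add_cancel,
    Complex.ofReal_zero, Complex.zero_cpow hz0, sub_zero]

lemma cpow_norm_int_Ioc {z : ℂ} (hz : 0 < z.re) {c : ℝ} (hc : 0 < c) :
    ∫ y in Ioc (0:ℝ) c, ‖(y : ℂ) ^ (z - 1)‖ = c ^ z.re / z.re := by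
  rw [setIntegral_congr_fun measurableSet_Ioc (g := fun y : ℝ => y ^ (z.re - 1))
    (fun y hy => by
      rw [Complex.norm_cpow_eq_rpow_re_of_pos hy.1]
      simp [Complex.sub_re])]
  rw [← intervalIntegral.integral_of_le hc.le, integral_rpow (Or.inl (by linarith)),
    sub_add_cancel, Real.zero_rpow hz.ne', sub_zero]


lemma fract_integrableOn {θ : ℝ} {z : ℂ} (hz : 0 < z.re) :
    IntegrableOn (fun x : ℝ => ((Int.fract (θ / x) : ℝ) : ℂ) * (x : ℂ) ^ (z - 1))
      (Ioo (0:ℝ) 1) := by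
  have hcpow : IntegrableOn (fun y : ℝ => (y : ℂ) ^ (z - 1)) (Ioo 0 1) :=
    (cpow_integrableOn hz zero_le_one).mono_set Ioo_subset_Ioc_self
  refine Integrable.mono' hcpow.norm
    ((Complex.measurable_ofReal.comp
      ((measurable_const.div measurable_id).fract)).aestronglyMeasurable.mul
      hcpow.aestronglyMeasurable) ?_
  filter_upwards with x
  rw [norm_mul, Complex.norm_real, Real.norm_eq_abs, Int.abs_fract]
  exact mul_le_of_le_one_left (norm_nonneg _) (Int.fract_lt_one _).le

lemma key_gt_one {θ : ℝ} (hθ : θ ∈ Ioo (0:ℝ) 1) {z : ℂ} (hz : 1 < z.re) :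
    ∫ x in Ioo (0:ℝ) 1, ((Int.fract (θ / x) : ℝ) : ℂ) * (x : ℂ) ^ (z - 1)
      = (θ : ℂ) / (z - 1) - (θ : ℂ) ^ z * riemannZeta z / z := by
  have hz0 : 0 < z.re := by linarith
  have hz1 : 0 < (z - 1).re := by simp [Complex.sub_re]; linarith
  have hzne : z ≠ 0 := fun h => by simp [h] at hz0
  have hz1ne : z - 1 ≠ 0 := fun h => by simp [h] at hz1
  -- integrability of the two pieces
  have hA : IntegrableOn (fun x : ℝ => (θ : ℂ) * (x : ℂ) ^ (z - 2)) (Ioo (0:ℝ) 1) := by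
    have : IntegrableOn (fun y : ℝ => (y : ℂ) ^ ((z - 1) - 1)) (Ioc (0:ℝ) 1) :=
      cpow_integrableOn hz1 zero_le_one
    rw [show z - 1 - 1 = z - 2 by ring] at this
    exact (this.mono_set Ioo_subset_Ioc_self).const_mul _
  have hFr := fract_integrableOn (θ := θ) hz0
  have hB : IntegrableOn (fun x : ℝ => ((⌊θ / x⌋₊ : ℕ) : ℂ) * (x : ℂ) ^ (z - 1))
      (Ioo (0:ℝ) 1) := by
    refine (hA.sub hFr).congr ?_
    rw [Filter.EventuallyEq, ae_restrict_iff' measurableSet_Ioo]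
    filter_upwards with x hx
    have := fract_decomp hθ hx z
    rw [Pi.sub_apply]
    linear_combination -this
  rw [setIntegral_congr_fun measurableSet_Ioo (fun x hx => fract_decomp hθ hx z),
    integral_sub hA hB]
  -- first integral
  have intA : ∫ x in Ioo (0:ℝ) 1, (θ : ℂ) * (x : ℂ) ^ (z - 2) = (θ : ℂ) / (z - 1) := by
    rw [integral_const_mul, ← integral_Ioc_eq_integral_Ioo,
      show (fun x : ℝ => (x:ℂ) ^ (z-2)) = fun x : ℝ => (x:ℂ) ^ ((z-1) - 1) by
        funext x; congr 1; ring,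
      cpow_int_Ioc hz1 one_pos]
    rw [Complex.ofReal_one, Complex.one_cpow]
    rw [mul_one_div]
  -- second integral
  have intB : ∫ x in Ioo (0:ℝ) 1, ((⌊θ / x⌋₊ : ℕ) : ℂ) * (x : ℂ) ^ (z - 1)
      = (θ : ℂ) ^ z * riemannZeta z / z := by
    have hsub : ∀ n : ℕ, Ioc (0:ℝ) (θ / (n + 1)) ⊆ Ioo (0:ℝ) 1 := by
      intro n y hy
      refine ⟨hy.1, lt_of_le_of_lt hy.2 ?_⟩
      calc θ / ((n:ℝ) + 1) ≤ θ := div_le_self hθ.1.le (by simp [Nat.cast_nonneg])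
        _ < 1 := hθ.2
    have hc : ∀ n : ℕ, 0 < θ / ((n:ℝ) + 1) := fun n => div_pos hθ.1 (by positivity)
    have hgint : ∀ n : ℕ, Integrable
        ((Ioc (0:ℝ) (θ / (n+1))).indicator (fun y : ℝ => (y:ℂ)^(z-1)))
        (volume.restrict (Ioo (0:ℝ) 1)) := fun n =>
      ((cpow_integrableOn hz0 (hc n).le).integrable_indicator measurableSet_Ioc).restrict
    have hgval : ∀ n : ℕ, (∫ x in Ioo (0:ℝ) 1,
        (Ioc (0:ℝ) (θ / (n+1))).indicator (fun y : ℝ => (y:ℂ)^(z-1)) x)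
        = ((θ / ((n:ℝ)+1) : ℝ) : ℂ) ^ z / z := by
      intro n
      rw [integral_indicator measurableSet_Ioc, Measure.restrict_restrict measurableSet_Ioc,
        inter_eq_self_of_subset_left (hsub n), cpow_int_Ioc hz0 (hc n)]
    have hgnorm : ∀ n : ℕ, (∫ x in Ioo (0:ℝ) 1,
        ‖(Ioc (0:ℝ) (θ / (n+1))).indicator (fun y : ℝ => (y:ℂ)^(z-1)) x‖)
        = (θ / ((n:ℝ)+1)) ^ z.re / z.re := by
      intro n
      simp_rw [norm_indicator_eq_indicator_norm]
      rw [integral_indicator measurableSet_Ioc, Measure.restrict_restrict measurableSet_Ioc,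
        inter_eq_self_of_subset_left (hsub n), cpow_norm_int_Ioc hz0 (hc n)]
    have hsum : Summable (fun n : ℕ => ∫ x in Ioo (0:ℝ) 1,
        ‖(Ioc (0:ℝ) (θ / (n+1))).indicator (fun y : ℝ => (y:ℂ)^(z-1)) x‖) := by
      simp_rw [hgnorm]
      apply Summable.div_const
      have h1 : Summable (fun n : ℕ => (((n:ℝ)+1) ^ z.re)⁻¹) := by
        have h0 := Real.summable_nat_rpow_inv.mpr hz
        have h2 := (summable_nat_add_iff (f := fun n : ℕ => (((n:ℝ)) ^ z.re)⁻¹) 1).mpr h0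
        simpa using h2
      apply Summable.congr (h1.mul_left (θ ^ z.re))
      intro n
      rw [Real.div_rpow hθ.1.le (by positivity), div_eq_mul_inv]
    rw [setIntegral_congr_fun measurableSet_Ioo (fun x hx => floor_tsum_eq hθ hx z),
      ← integral_tsum_of_summable_integral_norm hgint hsum, tsum_congr hgval]
    have hterm : ∀ n : ℕ, ((θ / ((n:ℝ)+1) : ℝ) : ℂ) ^ z / z
        = (θ:ℂ)^z * (1 / ((n:ℂ)+1) ^ z / z) := by
      intro n
      rw [div_eq_mul_inv θ, Complex.ofReal_mul,
        Complex.mul_cpow_ofReal_nonneg hθ.1.le (by positivity)]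
      rw [Complex.ofReal_inv, Complex.inv_cpow _ _ (by
        rw [Complex.arg_ofReal_of_nonneg (by positivity)]
        exact Real.pi_ne_zero.symm)]
      push_cast
      rw [← one_div, mul_div_assoc]
    rw [tsum_congr hterm, tsum_mul_left, tsum_div_const,
      ← zeta_eq_tsum_one_div_nat_add_one_cpow hz, mul_div_assoc]
  rw [intA, intB]

lemma U_preconnected : IsPreconnected ({z : ℂ | 0 < z.re} \ {1}) := by
  let C1 : Set ℂ := {z | 0 < z.re} ∩ {z | z.re < 1}
  let C2 : Set ℂ := {z | 1 < z.re}
  let C3 : Set ℂ := {z | 0 < z.re} ∩ {z | 0 < z.im}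
  let C4 : Set ℂ := {z | 0 < z.re} ∩ {z | z.im < 0}
  have h1 : IsPreconnected C1 :=
    ((convex_halfSpace_re_gt 0).inter (convex_halfSpace_re_lt 1)).isPreconnected
  have h2 : IsPreconnected C2 := (convex_halfSpace_re_gt 1).isPreconnected
  have h3 : IsPreconnected C3 :=
    ((convex_halfSpace_re_gt 0).inter (convex_halfSpace_im_gt 0)).isPreconnected
  have h4 : IsPreconnected C4 :=
    ((convex_halfSpace_re_gt 0).inter (convex_halfSpace_im_lt 0)).isPreconnected
  have h13 : IsPreconnected (C1 ∪ C3) := by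
    refine IsPreconnected.union (⟨1/2, 1/2⟩ : ℂ) ?_ ?_ h1 h3
    · exact ⟨by norm_num, by norm_num⟩
    · exact ⟨by norm_num, by norm_num⟩
  have h134 : IsPreconnected ((C1 ∪ C3) ∪ C4) := by
    refine IsPreconnected.union (⟨1/2, -1/2⟩ : ℂ) ?_ ?_ h13 h4
    · exact Or.inl ⟨by norm_num, by norm_num⟩
    · exact ⟨by norm_num, by norm_num⟩
  have hall : IsPreconnected (((C1 ∪ C3) ∪ C4) ∪ C2) := by
    refine IsPreconnected.union (⟨2, 1/2⟩ : ℂ) ?_ ?_ h134 h2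
    · exact Or.inl (Or.inr ⟨by norm_num, by norm_num⟩)
    · exact (by norm_num : (1:ℝ) < 2)
  have hset : {z : ℂ | 0 < z.re} \ {1} = ((C1 ∪ C3) ∪ C4) ∪ C2 := by
    ext w
    simp only [mem_diff, mem_setOf_eq, mem_singleton_iff, mem_union, mem_inter_iff,
      C1, C2, C3, C4]
    constructor
    · rintro ⟨hre, hne⟩
      rcases lt_trichotomy w.re 1 with h | h | h
      · exact Or.inl (Or.inl (Or.inl ⟨hre, h⟩))
      · rcases lt_trichotomy w.im 0 with h' | h' | h'
        · exact Or.inl (Or.inr ⟨hre, h'⟩)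
        · exact absurd (Complex.ext h (by simpa using h')) hne
        · exact Or.inl (Or.inl (Or.inr ⟨hre, h'⟩))
      · exact Or.inr h
    · rintro (((⟨h, h'⟩ | ⟨h, h'⟩) | ⟨h, h'⟩) | h)
      · exact ⟨h, fun hw => by rw [hw] at h'; simp at h'⟩
      · exact ⟨h, fun hw => by rw [hw] at h'; simp at h'⟩
      · exact ⟨h, fun hw => by rw [hw] at h'; simp at h'⟩
      · exact ⟨by linarith [h], fun hw => by rw [hw] at h; simp at h⟩
  rw [hset]
  exact hall

/-- Müntz/Nyman-Beurling identity: for `Re z > 0` (with `z ≠ 1`, the pole being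
interpreted by continuity) and `θ ∈ (0,1)`,
`∫₀¹ ρ(θ/x) x^(z-1) dx = θ/(z-1) - θ^z ζ(z)/z`. -/
theorem nyman_beurling_identity (z : ℂ) (hz : 0 < z.re) (hz1 : z ≠ 1)
    (θ : ℝ) (hθ : θ ∈ Ioo (0:ℝ) 1) :
    ∫ x in Ioo (0:ℝ) 1, ((Int.fract (θ / x) : ℝ) : ℂ) * (x : ℂ) ^ (z - 1) =
      (θ : ℂ) / (z - 1) - (θ : ℂ) ^ z * riemannZeta z / z := by
  set U : Set ℂ := {w : ℂ | 0 < w.re} \ {1} with hU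
  have hopen : IsOpen U :=
    (isOpen_lt continuous_const Complex.continuous_re).sdiff isClosed_singleton
  have hθ0 : (θ : ℂ) ≠ 0 := Complex.ofReal_ne_zero.mpr hθ.1.ne'
  set G : ℂ → ℂ := fun w => (θ : ℂ) / (w - 1) - (θ : ℂ) ^ w * riemannZeta w / w with hG
  have hFa : AnalyticOnNhd ℂ (mellin (nbf θ)) U :=
    DifferentiableOn.analyticOnNhd
      (fun s hs => (nbf_mellin_diff θ hs.1).differentiableWithinAt) hopen
  have hGa : AnalyticOnNhd ℂ G U := by
    refine DifferentiableOn.analyticOnNhd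
      (fun s hs => DifferentiableAt.differentiableWithinAt ?_) hopen
    have hs0 : s ≠ 0 := fun h => absurd hs.1 (by rw [h]; simp)
    have hs1 : s - 1 ≠ 0 := sub_ne_zero.mpr hs.2
    have h1 : DifferentiableAt ℂ (fun w : ℂ => (θ:ℂ) / (w - 1)) s :=
      (differentiableAt_const _).div
        (differentiableAt_id.sub (differentiableAt_const _)) hs1
    have h2 : DifferentiableAt ℂ (fun w : ℂ => (θ:ℂ) ^ w * riemannZeta w / w) s :=
      ((differentiableAt_id.const_cpow (Or.inl hθ0)).mul
        (differentiableAt_riemannZeta hs.2)).div differentiableAt_id hs0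
    exact h1.sub h2
  have h2mem : (2 : ℂ) ∈ U := by
    constructor
    · show (0:ℝ) < (2:ℂ).re; norm_num
    · simp only [mem_singleton_iff]
      intro h
      have := congrArg Complex.re h
      norm_num at this
  have hev : mellin (nbf θ) =ᶠ[nhds (2:ℂ)] G := by
    have hmem2 : {w : ℂ | 1 < w.re} ∈ nhds (2 : ℂ) := by
      refine (isOpen_lt continuous_const Complex.continuous_re).mem_nhds ?_
      show (1:ℝ) < (2:ℂ).re
      norm_num
    filter_upwards [hmem2] with w hw
    rw [nbf_mellin, key_gt_one hθ hw]
  have heq := hFa.eqOn_of_preconnected_of_eventuallyEq hGa U_preconnected h2mem hev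
    (⟨hz, hz1⟩ : z ∈ U)
  rw [← nbf_mellin]
  exact heq
end

section
/- If the Nyman–Beurling class 𝒩 is dense in L²(0,1), then ζ(z) ≠ 0 for all z with Re(z) > 1/2. -/
open MeasureTheory Set Complex Filter

noncomputable section NB

/-- The Nyman–Beurling kernel `x ↦ {θ/x}` on `(0,1]`, as a complex-valued function. -/
def nbK (θ : ℝ) : ℝ → ℂ :=
  Set.indicator (Ioc 0 1) (fun x => ((Int.fract (θ / x) : ℝ) : ℂ))

lemma fract_eq_self_sub_natFloor {r : ℝ} (h : 0 ≤ r) : Int.fract r = r - Nat.floor r := by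
  have : ((⌊r⌋₊ : ℝ)) = (⌊r⌋ : ℝ) := by
    have := Int.toNat_of_nonneg (Int.floor_nonneg.2 h)
    rw [← Int.floor_toNat]
    exact_mod_cast congrArg (fun n : ℤ => (n : ℝ)) this
  rw [Int.fract, this]

lemma norm_ofReal_fract_le (r : ℝ) : ‖((Int.fract r : ℝ) : ℂ)‖ ≤ 1 := by
  rw [Complex.norm_real, Real.norm_eq_abs, _root_.abs_of_nonneg (Int.fract_nonneg _)]
  exact (Int.fract_lt_one _).le

lemma meas_fract_div (θ : ℝ) : Measurable (fun x : ℝ => ((Int.fract (θ / x) : ℝ) : ℂ)) := by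
  exact Complex.measurable_ofReal.comp (measurable_fract.comp (measurable_const.div measurable_id))

lemma nbK_meas (θ : ℝ) : Measurable (nbK θ) :=
  (meas_fract_div θ).indicator measurableSet_Ioc

lemma nbK_norm_le (θ : ℝ) (x : ℝ) : ‖nbK θ x‖ ≤ 1 := by
  rw [nbK]
  by_cases hx : x ∈ Ioc (0:ℝ) 1
  · rw [Set.indicator_of_mem hx]
    rw [Complex.norm_real, Real.norm_eq_abs, _root_.abs_of_nonneg (Int.fract_nonneg _)]
    exact (Int.fract_lt_one _).le
  · rw [Set.indicator_of_notMem hx]; simp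

lemma nbK_integrable (θ : ℝ) : Integrable (nbK θ) := by
  rw [nbK, integrable_indicator_iff measurableSet_Ioc]
  refine Integrable.mono' (integrable_const 1) ((meas_fract_div θ).aestronglyMeasurable.restrict)
    (Filter.Eventually.of_forall fun x => ?_)
  rw [Complex.norm_real, Real.norm_eq_abs, _root_.abs_of_nonneg (Int.fract_nonneg _)]
  exact (Int.fract_lt_one _).le

lemma nbK_locInt (θ : ℝ) : LocallyIntegrableOn (nbK θ) (Ioi 0) := by
  exact (nbK_integrable θ).locallyIntegrable.locallyIntegrableOn _

/-- Rewriting the Mellin transform of `nbK` as a set integral. -/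
lemma mellin_nbK (θ : ℝ) (s : ℂ) :
    mellin (nbK θ) s
      = ∫ x in Ioc (0:ℝ) 1, (x:ℂ) ^ (s - 1) * ((Int.fract (θ / x) : ℝ) : ℂ) := by
  rw [mellin]
  rw [show (fun x : ℝ => (x:ℂ) ^ (s-1) • nbK θ x)
      = Set.indicator (Ioc (0:ℝ) 1) (fun x => (x:ℂ) ^ (s-1) * ((Int.fract (θ / x) : ℝ) : ℂ))
    from funext fun x => by
      rw [nbK, smul_eq_mul]
      by_cases hx : x ∈ Ioc (0:ℝ) 1
      · rw [Set.indicator_of_mem hx, Set.indicator_of_mem hx]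
      · rw [Set.indicator_of_notMem hx, Set.indicator_of_notMem hx, mul_zero]]
  rw [MeasureTheory.integral_indicator measurableSet_Ioc,
    Measure.restrict_restrict_of_subset Ioc_subset_Ioi_self]

/-- Integrability of `x^(s-1)` on `(0,1]` for `Re s > 0`. -/
lemma integrableOn_cpow_Ioc {s : ℂ} (hs : 0 < s.re) :
    IntegrableOn (fun x : ℝ => (x:ℂ) ^ (s - 1)) (Ioc 0 1) := by
  have h : -1 < (s - 1).re := by simp [Complex.sub_re]; linarith
  rw [← intervalIntegrable_iff_integrableOn_Ioc_of_le zero_le_one]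
  exact intervalIntegral.intervalIntegrable_cpow' h

/-- `∫_0^1 x^(s-1) dx = 1/s` for `Re s > 0`. -/
lemma integral_cpow_Ioc {s : ℂ} (hs : 0 < s.re) :
    ∫ x in Ioc (0:ℝ) 1, (x:ℂ) ^ (s - 1) = 1 / s := by
  have h : -1 < (s - 1).re := by simp [Complex.sub_re]; linarith
  have hs0 : s ≠ 0 := fun h0 => by simp [h0] at hs
  rw [← intervalIntegral.integral_of_le zero_le_one, integral_cpow (Or.inl h), sub_add_cancel,
    Complex.ofReal_zero, Complex.ofReal_one, Complex.one_cpow, Complex.zero_cpow hs0, sub_zero]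

/-- `∫_0^c x^(s-1) dx = c^s/s`. -/
lemma integral_cpow_Ioc_c {s : ℂ} (hs : 0 < s.re) {c : ℝ} (hc : 0 < c) :
    ∫ x in Ioc (0:ℝ) c, (x:ℂ) ^ (s - 1) = (c:ℂ) ^ s / s := by
  have h : -1 < (s - 1).re := by simp [Complex.sub_re]; linarith
  have hs0 : s ≠ 0 := fun h0 => by simp [h0] at hs
  rw [← intervalIntegral.integral_of_le hc.le, integral_cpow (Or.inl h), sub_add_cancel,
    Complex.ofReal_zero, Complex.zero_cpow hs0, sub_zero]

/-- `∫_0^c x^(r-1) dx = c^r/r` (real version). -/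
lemma integral_rpow_Ioc_c {r : ℝ} (hr : 0 < r) {c : ℝ} (hc : 0 < c) :
    ∫ x in Ioc (0:ℝ) c, x ^ (r - 1) = c ^ r / r := by
  have h : -1 < r - 1 := by linarith
  rw [← intervalIntegral.integral_of_le hc.le, integral_rpow (Or.inl h), sub_add_cancel,
    Real.zero_rpow (by linarith : r ≠ 0), sub_zero]

/-- The floor-part integral for `Re s > 1`. -/
lemma integral_floor_part {θ : ℝ} (hθ : θ ∈ Ioo (0:ℝ) 1) {s : ℂ} (hs : 1 < s.re) :
    ∫ x in Ioc (0:ℝ) 1, ((Nat.floor (θ / x) : ℝ) : ℂ) * (x:ℂ) ^ (s - 1)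
      = riemannZeta s * (θ:ℂ) ^ s / s := by
  obtain ⟨hθ0, hθ1⟩ := hθ
  have hs0 : 0 < s.re := by linarith
  set μ := volume.restrict (Ioc (0:ℝ) 1) with hμ
  set c : ℕ → ℝ := fun n => θ / (n + 1) with hc
  have hc0 : ∀ n, 0 < c n := fun n => div_pos hθ0 (by positivity)
  have hc1 : ∀ n, c n ≤ 1 := fun n =>
    le_trans (div_le_self hθ0.le (by norm_num : (1:ℝ) ≤ n + 1)) hθ1.le
  have hsub : ∀ n, Ioc (0:ℝ) (c n) ⊆ Ioc 0 1 := fun n => Ioc_subset_Ioc le_rfl (hc1 n)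
  set F : ℕ → ℝ → ℂ := fun n => Set.indicator (Ioc (0:ℝ) (c n)) (fun x => (x:ℂ) ^ (s - 1))
    with hF
  -- each F n is integrable
  have hFint : ∀ n, Integrable (F n) μ :=
    fun n => (integrableOn_cpow_Ioc hs0).indicator measurableSet_Ioc
  -- integral of each F n
  have hFval : ∀ n, ∫ x, F n x ∂μ = ((c n : ℝ):ℂ) ^ s / s := by
    intro n
    rw [hF, MeasureTheory.integral_indicator measurableSet_Ioc, hμ,
      Measure.restrict_restrict_of_subset (hsub n)]
    exact integral_cpow_Ioc_c hs0 (hc0 n)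
  -- integral of norms
  have hFnorm : ∀ n, ∫ x, ‖F n x‖ ∂μ = (c n) ^ s.re / s.re := by
    intro n
    have : (fun x => ‖F n x‖)
        = Set.indicator (Ioc (0:ℝ) (c n)) (fun x => ‖(x:ℂ) ^ (s - 1)‖) := by
      funext x; rw [hF, norm_indicator_eq_indicator_norm]
    rw [this, MeasureTheory.integral_indicator measurableSet_Ioc, hμ,
      Measure.restrict_restrict_of_subset (hsub n)]
    have : ∫ x in Ioc (0:ℝ) (c n), ‖(x:ℂ) ^ (s - 1)‖
        = ∫ x in Ioc (0:ℝ) (c n), x ^ (s.re - 1) := by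
      refine MeasureTheory.setIntegral_congr_fun measurableSet_Ioc (fun x hx => ?_)
      rw [Complex.norm_cpow_eq_rpow_re_of_pos hx.1]
      norm_num
    rw [this, integral_rpow_Ioc_c hs0 (hc0 n)]
  -- summability of the norms
  have hsum : Summable fun n => ∫ x, ‖F n x‖ ∂μ := by
    have h1 : Summable fun n : ℕ => (1:ℝ) / ((n:ℝ) + 1) ^ s.re := by
      have := (summable_nat_add_iff 1).2 (Real.summable_one_div_nat_rpow.2 hs)
      refine this.congr fun n => ?_
      push_cast
      ring_nf
    have h2 : Summable fun n : ℕ => θ ^ s.re / s.re * ((1:ℝ) / ((n:ℝ) + 1) ^ s.re) :=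
      h1.mul_left _
    refine h2.congr fun n => ?_
    rw [hFnorm n]
    simp only [hc]
    rw [Real.div_rpow hθ0.le (by positivity)]
    ring
  -- pointwise identity of the tsum
  have hpt : ∀ x ∈ Ioc (0:ℝ) 1,
      ∑' n, F n x = ((Nat.floor (θ / x) : ℝ) : ℂ) * (x:ℂ) ^ (s - 1) := by
    intro x hx
    have hx0 : 0 < x := hx.1
    have hnn : 0 ≤ θ / x := div_nonneg hθ0.le hx0.le
    set K : ℕ := Nat.floor (θ / x) with hK
    have hmem : ∀ n : ℕ, (x ∈ Ioc (0:ℝ) (c n)) ↔ n ∈ Finset.range K := by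
      intro n
      rw [Finset.mem_range, hK, ← Nat.add_one_le_iff, Nat.le_floor_iff hnn]
      constructor
      · intro h
        rw [le_div_iff₀ hx0]
        push_cast
        calc ((n:ℝ) + 1) * x ≤ ((n:ℝ) + 1) * (c n) := by
              have := h.2
              have hn1 : (0:ℝ) < (n:ℝ) + 1 := by positivity
              nlinarith
          _ = θ := by rw [hc]; field_simp
      · intro h
        refine ⟨hx0, ?_⟩
        rw [hc, le_div_iff₀ (by positivity : (0:ℝ) < (n:ℝ)+1)]
        rw [le_div_iff₀ hx0] at h
        push_cast at h ⊢
        linarith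
    have : ∑' n, F n x = ∑ n ∈ Finset.range K, F n x := by
      refine tsum_eq_sum fun n hn => ?_
      rw [hF]
      exact Set.indicator_of_notMem (fun hmem' => hn ((hmem n).1 hmem')) _
    rw [this]
    have : ∀ n ∈ Finset.range K, F n x = (x:ℂ) ^ (s - 1) := by
      intro n hn
      rw [hF]
      exact Set.indicator_of_mem ((hmem n).2 hn) _
    rw [Finset.sum_congr rfl this, Finset.sum_const, Finset.card_range, nsmul_eq_mul]
    norm_num
  -- put it together
  have key : ∑' n, ∫ x, F n x ∂μ = ∫ x, ∑' n, F n x ∂μ :=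
    integral_tsum_of_summable_integral_norm hFint hsum
  have key2 : ∫ x, ∑' n, F n x ∂μ
      = ∫ x in Ioc (0:ℝ) 1, ((Nat.floor (θ / x) : ℝ) : ℂ) * (x:ℂ) ^ (s - 1) :=
    MeasureTheory.setIntegral_congr_fun measurableSet_Ioc hpt
  have key3 : ∑' n, ∫ x, F n x ∂μ = riemannZeta s * (θ:ℂ) ^ s / s := by
    have hv : ∀ n : ℕ, ∫ x, F n x ∂μ = (θ:ℂ) ^ s * ((1:ℂ) / ((n:ℂ) + 1) ^ s) / s := by
      intro n
      rw [hFval n]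
      simp only [hc]
      congr 1
      have h1 : (θ / ((n:ℝ) + 1) : ℝ) = θ * ((n:ℝ) + 1)⁻¹ := by ring
      rw [h1, Complex.ofReal_mul, Complex.mul_cpow_ofReal_nonneg hθ0.le (by positivity)]
      congr 1
      rw [Complex.ofReal_inv, Complex.inv_cpow, inv_eq_one_div]
      · norm_num
      · rw [show (((n:ℝ) + 1 : ℝ) : ℂ) = (((n+1 : ℕ) : ℝ) : ℂ) by push_cast; ring,
          Complex.ofReal_natCast, Complex.natCast_arg]
        exact Real.pi_ne_zero.symm
    calc ∑' n, ∫ x, F n x ∂μ = ∑' n : ℕ, (θ:ℂ) ^ s * ((1:ℂ) / ((n:ℂ) + 1) ^ s) / s :=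
          tsum_congr hv
      _ = (∑' n : ℕ, (θ:ℂ) ^ s * ((1:ℂ) / ((n:ℂ) + 1) ^ s)) / s := by rw [tsum_div_const]
      _ = ((θ:ℂ) ^ s * ∑' n : ℕ, (1:ℂ) / ((n:ℂ) + 1) ^ s) / s := by rw [tsum_mul_left]
      _ = riemannZeta s * (θ:ℂ) ^ s / s := by
          rw [← zeta_eq_tsum_one_div_nat_add_one_cpow hs, mul_comm]
  rw [← key2, ← key, key3]

/-- Mellin transform of `nbK θ` for `Re s > 1`. -/
lemma mellin_nbK_eq {θ : ℝ} (hθ : θ ∈ Ioo (0:ℝ) 1) {s : ℂ} (hs : 1 < s.re) :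
    mellin (nbK θ) s = (θ:ℂ) / (s - 1) - riemannZeta s * (θ:ℂ) ^ s / s := by
  obtain ⟨hθ0, hθ1⟩ := hθ
  have hs0 : 0 < s.re := by linarith
  have hs1 : 0 < (s - 1).re := by simp [Complex.sub_re]; linarith
  rw [mellin_nbK]
  -- pointwise identity on (0,1]
  have heq : ∀ x ∈ Ioc (0:ℝ) 1,
      (x:ℂ) ^ (s - 1) * ((Int.fract (θ / x) : ℝ) : ℂ)
        = (θ:ℂ) * (x:ℂ) ^ (s - 2) - ((Nat.floor (θ / x) : ℝ) : ℂ) * (x:ℂ) ^ (s - 1) := by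
    intro x hx
    have hx0 : 0 < x := hx.1
    have hxC : (x:ℂ) ≠ 0 := by exact_mod_cast hx0.ne'
    rw [fract_eq_self_sub_natFloor (div_nonneg hθ0.le hx0.le)]
    push_cast
    have hpow : (x:ℂ) ^ (s - 2) = (x:ℂ) ^ (s - 1) * (x:ℂ)⁻¹ := by
      rw [show s - 2 = (s - 1) + (-1) by ring, Complex.cpow_add _ _ hxC,
        Complex.cpow_neg_one]
    rw [hpow]
    field_simp
  -- integrability of the three pieces
  have hint_f : IntegrableOn
      (fun x : ℝ => (x:ℂ) ^ (s - 1) * ((Int.fract (θ / x) : ℝ) : ℂ)) (Ioc 0 1) := by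
    have := ((integrableOn_cpow_Ioc hs0).bdd_mul
      ((meas_fract_div θ).aestronglyMeasurable.restrict)
      (c := 1) (Filter.Eventually.of_forall fun x => by
        rw [Complex.norm_real, Real.norm_eq_abs, _root_.abs_of_nonneg (Int.fract_nonneg _)]
        exact (Int.fract_lt_one _).le))
    exact this.congr (Filter.Eventually.of_forall fun x => mul_comm _ _)
  have hint_A : IntegrableOn (fun x : ℝ => (θ:ℂ) * (x:ℂ) ^ (s - 2)) (Ioc 0 1) := by
    have := (integrableOn_cpow_Ioc hs1).const_mul (θ:ℂ)
    exact this.congr (Filter.Eventually.of_forall fun x => by norm_num; left; ring_nf)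
  have hint_B : IntegrableOn
      (fun x : ℝ => ((Nat.floor (θ / x) : ℝ) : ℂ) * (x:ℂ) ^ (s - 1)) (Ioc 0 1) := by
    refine (hint_A.sub hint_f).congr ?_
    rw [Filter.EventuallyEq, ae_restrict_iff' measurableSet_Ioc]
    exact Filter.Eventually.of_forall fun x hx => by
      simp only [Pi.sub_apply]
      rw [heq x hx]; ring
  rw [MeasureTheory.setIntegral_congr_fun measurableSet_Ioc heq,
    MeasureTheory.integral_sub hint_A hint_B, integral_floor_part ⟨hθ0, hθ1⟩ hs,
    MeasureTheory.integral_const_mul]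
  have : ∫ x in Ioc (0:ℝ) 1, (x:ℂ) ^ (s - 2) = 1 / (s - 1) := by
    have := integral_cpow_Ioc hs1
    rw [show s - 1 - 1 = s - 2 by ring] at this
    exact this
  rw [this]
  ring

/-- Mellin transform of `nbK θ` in the strip, by analytic continuation. -/
lemma mellin_nbK_eq_strip {θ : ℝ} (hθ : θ ∈ Ioo (0:ℝ) 1) {z : ℂ}
    (hz : 1 / 2 < z.re) (hz1 : z.re < 1) :
    mellin (nbK θ) z = (θ:ℂ) / (z - 1) - riemannZeta z * (θ:ℂ) ^ z / z := by
  obtain ⟨hθ0, hθ1⟩ := hθ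
  have hθC : (θ:ℂ) ≠ 0 := by exact_mod_cast hθ0.ne'
  set e : ℝ := if 0 ≤ z.im then 1 else -1 with he
  have he2 : e * e = 1 := by rw [he]; split_ifs <;> norm_num
  set V : Set ℂ := {s | 1/2 < s.re} ∩ {s | s.re - e * s.im < 1} with hV
  have hVopen : IsOpen V :=
    (isOpen_lt continuous_const Complex.continuous_re).inter
      (isOpen_lt (Complex.continuous_re.sub (continuous_const.mul Complex.continuous_im))
        continuous_const)
  have hVpre : IsPreconnected V := by
    refine Convex.isPreconnected ?_
    refine Convex.inter ?_ ?_
    · exact convex_halfSpace_gt ⟨fun a b => Complex.add_re a b,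
        fun c a => by simp [Complex.smul_re]⟩ _
    · exact convex_halfSpace_lt ⟨fun a b => by simp only [Complex.add_re, Complex.add_im]; ring,
        fun c a => by simp only [Complex.smul_re, Complex.smul_im, smul_eq_mul]; ring⟩ _
  have hzV : z ∈ V := by
    refine ⟨hz, ?_⟩
    have h2 : 0 ≤ e * z.im := by
      rw [he]; split_ifs with h <;> nlinarith
    simp only [mem_setOf_eq]
    linarith
  set w : ℂ := 2 + (10 * e) * Complex.I with hw
  have hwre : w.re = 2 := by simp [hw]
  have hwim : w.im = 10 * e := by simp [hw]
  have hwV : w ∈ V := by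
    constructor
    · simp only [mem_setOf_eq, hwre]; norm_num
    · simp only [mem_setOf_eq, hwre, hwim]
      have : e * (10 * e) = 10 := by nlinarith
      rw [this]; norm_num
  have h1V : ∀ s ∈ V, s ≠ 1 := by
    rintro s ⟨_, hs2⟩ rfl
    simp only [mem_setOf_eq, Complex.one_re, Complex.one_im, mul_zero] at hs2
    linarith
  have h0V : ∀ s ∈ V, s ≠ 0 := by
    rintro s ⟨hs1, _⟩ rfl
    simp only [mem_setOf_eq, Complex.zero_re] at hs1
    linarith
  -- LHS analytic on V
  have hA : AnalyticOnNhd ℂ (mellin (nbK θ)) V := by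
    refine DifferentiableOn.analyticOnNhd (fun s hs => DifferentiableAt.differentiableWithinAt ?_)
      hVopen
    refine mellin_differentiableAt_of_isBigO_rpow (a := s.re + 1) (b := 0)
      (nbK_locInt θ) ?_ (by linarith) ?_ (by have h := hs.1; simp only [mem_setOf_eq] at h; linarith)
    · refine Asymptotics.IsBigO.of_bound 1 ?_
      filter_upwards [Filter.eventually_ge_atTop (2:ℝ)] with x hx
      have : x ∉ Ioc (0:ℝ) 1 := fun h => by linarith [h.2]
      rw [nbK, Set.indicator_of_notMem this, norm_zero]
      positivity
    · refine Asymptotics.IsBigO.of_bound 1 ?_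
      refine Filter.Eventually.of_forall fun x => ?_
      rw [neg_zero, Real.rpow_zero, norm_one, mul_one]
      exact nbK_norm_le θ x
  -- RHS analytic on V
  have hB : AnalyticOnNhd ℂ
      (fun s => (θ:ℂ) / (s - 1) - riemannZeta s * (θ:ℂ) ^ s / s) V := by
    refine DifferentiableOn.analyticOnNhd (fun s hs => DifferentiableAt.differentiableWithinAt ?_)
      hVopen
    have hs1 : s ≠ 1 := h1V s hs
    have hs0 : s ≠ 0 := h0V s hs
    refine DifferentiableAt.sub ?_ ?_
    · exact (differentiableAt_const _).div ((differentiableAt_id.sub_const 1))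
        (sub_ne_zero.2 hs1)
    · exact ((differentiableAt_riemannZeta hs1).mul
        (differentiableAt_id.const_cpow (Or.inl hθC))).div differentiableAt_id hs0
  -- agreement near w
  have hEq : mellin (nbK θ)
      =ᶠ[nhds w] (fun s => (θ:ℂ) / (s - 1) - riemannZeta s * (θ:ℂ) ^ s / s) := by
    have hUopen : IsOpen {s : ℂ | 1 < s.re} := isOpen_lt continuous_const Complex.continuous_re
    have hwU : w ∈ {s : ℂ | 1 < s.re} := by simp only [mem_setOf_eq, hwre]; norm_num
    filter_upwards [hUopen.mem_nhds hwU] with s hs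
    exact mellin_nbK_eq ⟨hθ0, hθ1⟩ hs
  exact hA.eqOn_of_preconnected_of_eventuallyEq hB hVpre hwV hEq hzV

/-- The key integral identity at a zeta zero. -/
lemma integral_fract_at_zero {θ : ℝ} (hθ : θ ∈ Ioo (0:ℝ) 1) {z : ℂ}
    (hz : 1 / 2 < z.re) (hz1 : z.re < 1) (h0 : riemannZeta z = 0) :
    ∫ x in Ioo (0:ℝ) 1, ((Int.fract (θ / x) : ℝ) : ℂ) * (x:ℂ) ^ (z - 1)
      = (θ:ℂ) / (z - 1) := by
  have h1 : ∫ x in Ioo (0:ℝ) 1, ((Int.fract (θ / x) : ℝ) : ℂ) * (x:ℂ) ^ (z - 1)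
      = ∫ x in Ioc (0:ℝ) 1, (x:ℂ) ^ (z - 1) * ((Int.fract (θ / x) : ℝ) : ℂ) := by
    rw [← MeasureTheory.integral_Ioc_eq_integral_Ioo]
    exact MeasureTheory.setIntegral_congr_fun measurableSet_Ioc fun x _ => mul_comm _ _
  rw [h1, ← mellin_nbK, mellin_nbK_eq_strip hθ hz hz1, h0]
  ring

end NB

/-- If the Nyman–Beurling class is dense in `L²(0,1)`, then `ζ(z) ≠ 0` for
`Re z > 1/2`. -/
theorem nb_dense_imp_zero_free
    (hdense : ∀ g : ℝ → ℝ, MemLp g 2 (volume.restrict (Ioo (0:ℝ) 1)) →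
      ∀ ε > (0:ℝ), ∃ (m : ℕ) (c β : Fin m → ℝ), 1 ≤ m ∧
        (∀ i, β i ∈ Ioo (0:ℝ) 1) ∧ (∑ i, c i * β i = 0) ∧
        eLpNorm (fun x => g x - ∑ i, c i * Int.fract (β i / x)) 2
            (volume.restrict (Ioo (0:ℝ) 1)) < ENNReal.ofReal ε)
    (z : ℂ) (hz : 1 / 2 < z.re) :
    riemannZeta z ≠ 0 := by
  by_cases hge : 1 ≤ z.re
  · exact riemannZeta_ne_zero_of_one_le_re hge
  push_neg at hge
  intro h0
  have hz0 : z ≠ 0 := fun h => by rw [h] at hz; simp at hz; linarith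
  set μ := volume.restrict (Ioo (0:ℝ) 1) with hμ
  haveI : IsFiniteMeasure μ := by
    constructor
    rw [hμ, Measure.restrict_apply_univ, Real.volume_Ioo]
    exact ENNReal.ofReal_lt_top
  set w : ℝ → ℂ := fun x => (x:ℂ) ^ (z - 1) with hw
  set v : ℝ → ℝ := fun x => x ^ (z.re - 1) with hv
  have hvmeas : AEStronglyMeasurable v μ := by
    rw [hv]; exact (by fun_prop : Measurable fun x : ℝ => x ^ (z.re - 1)).aestronglyMeasurable
  -- `v` is square integrable
  have hMv : MemLp v 2 μ := by
    rw [memLp_two_iff_integrable_sq hvmeas]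
    have hbase : IntegrableOn (fun x : ℝ => x ^ (2 * z.re - 2)) (Ioo 0 1) := by
      have h : (-1:ℝ) < 2 * z.re - 2 := by linarith
      exact ((intervalIntegrable_iff_integrableOn_Ioc_of_le zero_le_one).1
        (intervalIntegral.intervalIntegrable_rpow' h)).mono_set Ioo_subset_Ioc_self
    refine hbase.congr ?_
    rw [Filter.EventuallyEq, ae_restrict_iff' measurableSet_Ioo]
    refine Filter.Eventually.of_forall fun x hx => ?_
    rw [hv]
    rw [← Real.rpow_natCast (x ^ (z.re - 1)) 2, ← Real.rpow_mul hx.1.le]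
    congr 1
    push_cast
    ring
  set C := (eLpNorm v 2 μ).toReal with hC
  have hC0 : 0 ≤ C := ENNReal.toReal_nonneg
  set ε := ‖(1:ℂ)/z‖ / (C + 1) with hε
  have hnz : 0 < ‖(1:ℂ)/z‖ := norm_pos_iff.2 (one_div_ne_zero hz0)
  have hεpos : 0 < ε := div_pos hnz (by linarith)
  obtain ⟨m, c, β, hm, hβ, hsum, happrox⟩ :=
    hdense (fun _ => 1) (memLp_const 1) ε hεpos
  set h : ℝ → ℝ := fun x => 1 - ∑ i, c i * Int.fract (β i / x) with hh
  have happrox' : eLpNorm h 2 μ < ENNReal.ofReal ε := happrox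
  have hhmeas : Measurable h := by
    rw [hh]
    exact measurable_const.sub (Finset.measurable_sum _ fun i _ =>
      measurable_const.mul (measurable_fract.comp (measurable_const.div measurable_id)))
  -- integrability of the pieces
  have hwint : IntegrableOn w (Ioo 0 1) :=
    (integrableOn_cpow_Ioc (by linarith : 0 < z.re)).mono_set Ioo_subset_Ioc_self
  have hfrint : ∀ i : Fin m,
      IntegrableOn (fun x : ℝ => ((Int.fract (β i / x) : ℝ) : ℂ) * w x) (Ioo 0 1) :=
    fun i => hwint.bdd_mul ((meas_fract_div (β i)).aestronglyMeasurable.restrict)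
      (c := 1) (Filter.Eventually.of_forall fun x => norm_ofReal_fract_le _)
  -- the integral identity
  have hkey : ∫ x, ((h x : ℝ) : ℂ) * w x ∂μ = 1/z := by
    have hptw : ∀ x : ℝ, ((h x : ℝ) : ℂ) * w x
        = w x - ∑ i, (c i : ℂ) * (((Int.fract (β i / x) : ℝ) : ℂ) * w x) := by
      intro x
      simp only [hh, hw]
      simp only [Complex.ofReal_sub, Complex.ofReal_one, Complex.ofReal_sum, Complex.ofReal_mul,
        div_eq_mul_inv, sub_mul, one_mul, Finset.sum_mul]
      congr 1
      exact Finset.sum_congr rfl fun i _ => by ring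
    rw [MeasureTheory.integral_congr_ae (Filter.Eventually.of_forall hptw)]
    have hsumint : Integrable
        (fun x => ∑ i, (c i : ℂ) * (((Int.fract (β i / x) : ℝ) : ℂ) * w x)) μ :=
      integrable_finset_sum _ fun i _ => ((hfrint i).const_mul _)
    rw [MeasureTheory.integral_sub hwint hsumint,
      MeasureTheory.integral_finset_sum _ (fun i _ => (hfrint i).const_mul _)]
    have hIw : ∫ x, w x ∂μ = 1/z := by
      rw [hμ, ← MeasureTheory.integral_Ioc_eq_integral_Ioo]
      exact integral_cpow_Ioc (by linarith)
    have hIfr : ∀ i : Fin m, ∫ x, (c i : ℂ) * (((Int.fract (β i / x) : ℝ) : ℂ) * w x) ∂μ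
        = (c i : ℂ) * ((β i : ℂ) / (z - 1)) := by
      intro i
      rw [MeasureTheory.integral_const_mul]
      congr 1
      exact integral_fract_at_zero (hβ i) hz hge h0
    rw [Finset.sum_congr rfl fun i _ => hIfr i, hIw]
    have : ∑ i, (c i : ℂ) * ((β i : ℂ) / (z - 1))
        = ((∑ i, c i * β i : ℝ) : ℂ) / (z - 1) := by
      simp_rw [← mul_div_assoc]
      rw [← Finset.sum_div]
      push_cast
      rfl
    rw [this, hsum]
    simp
  -- the norm bound via Cauchy–Schwarz
  set u : ℝ → ℝ := fun x => ‖h x‖ with hu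
  have hMh : MemLp h 2 μ := ⟨hhmeas.aestronglyMeasurable, happrox'.trans_le le_top⟩
  have hMu : MemLp u 2 μ := hMh.norm
  have hb1 : ‖(1:ℂ)/z‖ ≤ ∫ x, ‖((h x : ℝ) : ℂ) * w x‖ ∂μ := by
    rw [← hkey]
    exact norm_integral_le_integral_norm _
  have hb2 : ∫ x, ‖((h x : ℝ) : ℂ) * w x‖ ∂μ = ∫ x, u x * v x ∂μ := by
    refine MeasureTheory.integral_congr_ae ?_
    rw [Filter.EventuallyEq, ae_restrict_iff' measurableSet_Ioo]
    refine Filter.Eventually.of_forall fun x hx => ?_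
    rw [norm_mul, hu, hv, hw]
    congr 1
    · rw [Complex.norm_real]
    · rw [Complex.norm_cpow_eq_rpow_re_of_pos hx.1]
      norm_num
  set U := hMu.toLp u with hU
  set Vl := hMv.toLp v with hVl
  have hUV : ∫ x, u x * v x ∂μ = (inner ℝ U Vl : ℝ) := by
    rw [MeasureTheory.L2.inner_def]
    refine (MeasureTheory.integral_congr_ae ?_).symm
    filter_upwards [hMu.coeFn_toLp, hMv.coeFn_toLp] with x h1 h2
    rw [RCLike.inner_apply, RCLike.conj_to_real, h1, h2, mul_comm]
  have hCS : (inner ℝ U Vl : ℝ) ≤ ‖U‖ * ‖Vl‖ := real_inner_le_norm U Vl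
  have hnU : ‖U‖ = (eLpNorm h 2 μ).toReal := by
    rw [hU, MeasureTheory.Lp.norm_toLp, hu, MeasureTheory.eLpNorm_norm]
  have hnV : ‖Vl‖ = C := by rw [hVl, MeasureTheory.Lp.norm_toLp, hC]
  have hlt : (eLpNorm h 2 μ).toReal < ε := by
    have h1 := (ENNReal.toReal_lt_toReal (happrox'.trans_le le_top).ne
      ENNReal.ofReal_ne_top).2 happrox'
    rwa [ENNReal.toReal_ofReal hεpos.le] at h1
  have hfinal : ‖(1:ℂ)/z‖ < ‖(1:ℂ)/z‖ := by
    calc ‖(1:ℂ)/z‖ ≤ ∫ x, ‖((h x : ℝ) : ℂ) * w x‖ ∂μ := hb1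
      _ = (inner ℝ U Vl : ℝ) := by rw [hb2, hUV]
      _ ≤ ‖U‖ * ‖Vl‖ := hCS
      _ = (eLpNorm h 2 μ).toReal * C := by rw [hnU, hnV]
      _ < ε * (C + 1) := by nlinarith [ENNReal.toReal_nonneg (a := eLpNorm h 2 μ)]
      _ = ‖(1:ℂ)/z‖ := by rw [hε, div_mul_cancel₀ _ (by linarith : C + 1 ≠ 0)]
  exact absurd hfinal (lt_irrefl _)
end

section
/- Fix p ∈ (1, ∞) with conjugate exponent q (1/p + 1/q = 1). If 𝒩 is dense in L^p(0,1), then ζ(z) ≠ 0 for all z with Re(z) > 1/p. -/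
open MeasureTheory Set Complex intervalIntegral

namespace NBaux

lemma cpow_Ioc_int {c : ℝ} (hc : 0 < c) {s : ℂ} (hs : 0 < s.re) :
    ∫ x in Ioc (0:ℝ) c, (x:ℂ) ^ (s - 1) = (c:ℂ) ^ s / s := by
  rw [← integral_of_le hc.le,
    integral_cpow (Or.inl (by simp [Complex.sub_re]; linarith))]
  have h0 : ((0:ℝ):ℂ) = 0 := by norm_num
  rw [sub_add_cancel, h0, Complex.zero_cpow (by intro h; rw [h] at hs; simp at hs), sub_zero]

lemma rpow_Ioc_int {c : ℝ} (hc : 0 < c) {σ : ℝ} (hσ : 0 < σ) :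
    ∫ x in Ioc (0:ℝ) c, x ^ (σ - 1) = c ^ σ / σ := by
  rw [← integral_of_le hc.le,
    integral_rpow (Or.inl (by linarith))]
  rw [sub_add_cancel, Real.zero_rpow (by positivity), sub_zero]

lemma norm_cpow_of_pos' {x : ℝ} (hx : 0 < x) (w : ℂ) :
    ‖(x:ℂ) ^ w‖ = x ^ w.re := by
  rw [Complex.norm_cpow_eq_rpow_re_of_pos hx]

lemma norm_cpow_of_pos {x : ℝ} (hx : 0 < x) (s : ℂ) :
    ‖(x:ℂ) ^ (s-1)‖ = x ^ (s.re - 1) := by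
  rw [Complex.norm_cpow_eq_rpow_re_of_pos hx]
  simp [Complex.sub_re]

lemma integrableOn_cpow {c : ℝ} (hc : c ≤ 1) {s : ℂ} (hs : 0 < s.re) :
    IntegrableOn (fun x : ℝ => (x:ℂ) ^ (s - 1)) (Ioc 0 c) := by
  have h := (intervalIntegrable_cpow' (a := 0) (b := 1)
    (r := s - 1) (by simp [Complex.sub_re]; linarith))
  rw [intervalIntegrable_iff_integrableOn_Ioc_of_le (by norm_num)] at h
  exact h.mono_set (Ioc_subset_Ioc_right hc)

end NBaux

namespace NBaux
open Filter

lemma div_nat_le_one (n : ℕ) : 1/(n+1:ℝ) ≤ 1 := by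
  rw [div_le_one (by positivity)]; norm_num

lemma inter_Ioc_ae {c : ℝ} (hc : c ≤ 1) :
    (Ioc (0:ℝ) c ∩ Ioo 0 1 : Set ℝ) =ᵐ[volume] Ioc (0:ℝ) c := by
  rw [MeasureTheory.ae_eq_set]
  constructor
  · refine measure_mono_null ?_ (measure_empty (μ := volume))
    rintro x ⟨⟨h1, h2⟩, h3⟩; exact h3 h1
  · refine measure_mono_null ?_ (measure_singleton (1:ℝ))
    rintro x ⟨⟨hx0, hxc⟩, hn⟩
    have : ¬ (0 < x ∧ x < 1) := fun h => hn ⟨⟨hx0, hxc⟩, h.1, h.2⟩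
    push_neg at this
    exact le_antisymm (hxc.trans hc) (this hx0)

lemma indicator_integral {c : ℝ} (hc0 : 0 < c) (hc : c ≤ 1) {s : ℂ} (hs : 0 < s.re) :
    ∫ x, (Ioc (0:ℝ) c).indicator (fun x => (x:ℂ)^(s-1)) x
       ∂(volume.restrict (Ioo (0:ℝ) 1)) = (c:ℂ)^s / s := by
  rw [MeasureTheory.integral_indicator measurableSet_Ioc,
    Measure.restrict_restrict measurableSet_Ioc,
    setIntegral_congr_set (inter_Ioc_ae hc), cpow_Ioc_int hc0 hs]

end NBaux

namespace NBaux

lemma floor_integral {s : ℂ} (hs : 1 < s.re) :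
    ∫ x in Ioo (0:ℝ) 1, ((⌊1/x⌋₊ : ℝ):ℂ) * (x:ℂ) ^ (s-1) = riemannZeta s / s := by
  have hs0 : 0 < s.re := lt_trans one_pos hs
  set μ := volume.restrict (Ioo (0:ℝ) 1) with hμ
  set F : ℕ → ℝ → ℂ := fun n x =>
    (Ioc (0:ℝ) (1/(n+1))).indicator (fun x => (x:ℂ)^(s-1)) x with hF
  have hpos : ∀ n : ℕ, (0:ℝ) < 1/(n+1) := fun n => by positivity
  -- value of each integral
  have hval : ∀ n : ℕ, ∫ x, F n x ∂μ = (1/((n:ℂ)+1))^s / s := by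
    intro n
    rw [hF]
    rw [indicator_integral (hpos n) (div_nat_le_one n) hs0]
    norm_num
  -- integrability of each piece
  have hInt : ∀ n : ℕ, Integrable (F n) μ := by
    intro n
    refine Integrable.restrict ?_
    rw [hF]
    exact (integrable_indicator_iff measurableSet_Ioc).2
      ((integrableOn_cpow (div_nat_le_one n) hs0))
  -- summability of integrals of norms
  have hSum : Summable (fun n : ℕ => ∫ x, ‖F n x‖ ∂μ) := by
    have hbound : ∀ n : ℕ, ∫ x, ‖F n x‖ ∂μ ≤ (1/((n:ℝ)+1))^s.re / s.re := by
      intro n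
      have h1 : ∀ x, ‖F n x‖ =
          (Ioc (0:ℝ) (1/(n+1))).indicator (fun x => ‖(x:ℂ)^(s-1)‖) x := fun x => by
        rw [hF]; exact norm_indicator_eq_indicator_norm _ _
      simp_rw [h1]
      rw [MeasureTheory.integral_indicator measurableSet_Ioc, hμ,
        Measure.restrict_restrict measurableSet_Ioc,
        setIntegral_congr_set (inter_Ioc_ae (div_nat_le_one n))]
      have h2 : ∫ x in Ioc (0:ℝ) (1/(n+1)), ‖(x:ℂ)^(s-1)‖ =
          ∫ x in Ioc (0:ℝ) (1/(n+1)), x ^ (s.re - 1) := by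
        refine setIntegral_congr_fun measurableSet_Ioc (fun x hx => ?_)
        exact norm_cpow_of_pos hx.1 s
      rw [h2, rpow_Ioc_int (hpos n) hs0]
    refine Summable.of_nonneg_of_le (fun n => integral_nonneg (fun x => norm_nonneg _))
      hbound ?_
    apply Summable.div_const
    have : ∀ n : ℕ, (1/((n:ℝ)+1))^s.re = 1/((n:ℝ)+1)^s.re := by
      intro n
      rw [one_div, one_div, Real.inv_rpow (by positivity)]
    simp_rw [this]
    have := (Real.summable_one_div_nat_rpow (p := s.re)).2 hs
    have h3 := (summable_nat_add_iff (f := fun n : ℕ => 1/(n:ℝ)^s.re) 1).2 this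
    refine h3.congr (fun n => ?_)
    push_cast
    ring_nf
  -- exchange sum and integral
  have hexch := MeasureTheory.integral_tsum_of_summable_integral_norm hInt hSum
  -- pointwise identity
  have hpt : ∀ x ∈ Ioo (0:ℝ) 1, ∑' n : ℕ, F n x = ((⌊1/x⌋₊ : ℝ):ℂ) * (x:ℂ)^(s-1) := by
    intro x hx
    have hx0 : (0:ℝ) < x := hx.1
    have key : ∀ n : ℕ, x ∈ Ioc (0:ℝ) (1/(n+1)) ↔ n + 1 ≤ ⌊1/x⌋₊ := by
      intro n
      rw [mem_Ioc, Nat.le_floor_iff (by positivity)]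
      constructor
      · rintro ⟨-, h⟩
        rw [le_div_iff₀ hx0]
        rw [le_div_iff₀ (by positivity : (0:ℝ) < (n:ℝ)+1)] at h
        push_cast
        nlinarith
      · intro h
        refine ⟨hx0, ?_⟩
        rw [le_div_iff₀ hx0] at h
        rw [le_div_iff₀ (by positivity : (0:ℝ) < (n:ℝ)+1)]
        push_cast at h ⊢
        nlinarith
    rw [tsum_eq_sum (s := Finset.range ⌊1/x⌋₊) (fun n hn => ?side)]
    case side =>
      rw [hF]
      refine indicator_of_notMem (fun hmem => hn ?_) _
      rw [Finset.mem_range]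
      have := (key n).1 hmem
      omega
    have hmem : ∀ n ∈ Finset.range ⌊1/x⌋₊, F n x = (x:ℂ)^(s-1) := by
      intro n hn
      rw [hF]
      refine indicator_of_mem ((key n).2 ?_) _
      rw [Finset.mem_range] at hn
      omega
    rw [Finset.sum_congr rfl hmem, Finset.sum_const, Finset.card_range, nsmul_eq_mul]
    push_cast
    ring
  calc ∫ x in Ioo (0:ℝ) 1, ((⌊1/x⌋₊ : ℝ):ℂ) * (x:ℂ)^(s-1)
      = ∫ x, (∑' n : ℕ, F n x) ∂μ := by
        refine (setIntegral_congr_fun measurableSet_Ioo (fun x hx => ?_)).symm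
        exact hpt x hx
    _ = ∑' n : ℕ, ∫ x, F n x ∂μ := hexch.symm
    _ = ∑' n : ℕ, (1/((n:ℂ)+1))^s / s := by simp_rw [hval]
    _ = riemannZeta s / s := by
        rw [tsum_div_const]
        congr 1
        rw [zeta_eq_tsum_one_div_nat_add_one_cpow hs]
        refine tsum_congr (fun n => ?_)
        rw [one_div, one_div, Complex.inv_cpow _ _ ?harg2]
        case harg2 =>
          have : ((n:ℂ)+1) = ((n+1:ℝ):ℂ) := by push_cast; ring
          rw [this, Complex.arg_ofReal_of_nonneg (by positivity)]
          exact Ne.symm (ne_of_gt Real.pi_pos)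

end NBaux

namespace NBaux

lemma measurable_fract_div (b : ℝ) :
    Measurable (fun x : ℝ => ((Int.fract (b/x) : ℝ) : ℂ)) := by
  refine Complex.measurable_ofReal.comp ?_
  exact ((measurable_const.div measurable_id).fract)

lemma integrableOn_fract_cpow (b : ℝ) {s : ℂ} (hs : 0 < s.re) :
    IntegrableOn (fun x : ℝ => ((Int.fract (b/x) : ℝ):ℂ) * (x:ℂ) ^ (s - 1)) (Ioo 0 1) := by
  refine Integrable.bdd_mul ((integrableOn_cpow le_rfl hs).mono_set Ioo_subset_Ioc_self)
    ((measurable_fract_div b).aestronglyMeasurable) (c := 1) (Filter.Eventually.of_forall fun x => ?_)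
  rw [Complex.norm_real, Real.norm_eq_abs, _root_.abs_of_nonneg (Int.fract_nonneg _)]
  exact (Int.fract_lt_one _).le

lemma fract_one_div_eq (x : ℝ) (hx : 0 < x) :
    (Int.fract (1/x) : ℝ) = 1/x - (⌊1/x⌋₊ : ℝ) := by
  have h1 : (0:ℝ) ≤ 1/x := by positivity
  have h2 : ((⌊1/x⌋₊ : ℝ)) = ((⌊1/x⌋ : ℤ) : ℝ) := by
    rw [← Int.floor_toNat]
    exact_mod_cast congrArg (fun z : ℤ => (z : ℝ))
      (Int.toNat_of_nonneg (Int.floor_nonneg.2 h1))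
  rw [h2, Int.self_sub_floor]

lemma integrableOn_floor_cpow {s : ℂ} (hs : 1 < s.re) :
    IntegrableOn (fun x : ℝ => ((⌊1/x⌋₊ : ℝ):ℂ) * (x:ℂ) ^ (s - 1)) (Ioo 0 1) := by
  have hs0 : 0 < s.re := lt_trans one_pos hs
  have hA : IntegrableOn (fun x : ℝ => (x:ℂ) ^ (s - 2)) (Ioo 0 1) := by
    have h := (intervalIntegrable_cpow' (a := 0) (b := 1)
      (r := s - 2) (by simp [Complex.sub_re]; linarith))
    rw [intervalIntegrable_iff_integrableOn_Ioc_of_le (by norm_num)] at h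
    exact h.mono_set Ioo_subset_Ioc_self
  refine Integrable.mono hA ?_ ?_
  · refine Measurable.aestronglyMeasurable ?_
    refine Measurable.mul ?_ (by fun_prop)
    refine Complex.measurable_ofReal.comp ?_
    exact measurable_from_top.comp ((measurable_const.div measurable_id).nat_floor)
  · rw [MeasureTheory.ae_restrict_iff' measurableSet_Ioo]
    refine Filter.Eventually.of_forall (fun x hx => ?_)
    have hx0 : 0 < x := hx.1
    rw [norm_mul, Complex.norm_real, Real.norm_eq_abs,
      _root_.abs_of_nonneg (by positivity : (0:ℝ) ≤ (⌊1/x⌋₊ : ℝ)),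
      norm_cpow_of_pos' hx0, norm_cpow_of_pos' hx0]
    have h1 : (⌊1/x⌋₊ : ℝ) ≤ 1/x := Nat.floor_le (by positivity)
    have h2 : x ^ ((s-2).re) = (1/x) * x ^ ((s-1).re) := by
      have h4 : (s-2).re = (s-1).re - 1 := by simp [Complex.sub_re]; ring
      rw [h4, Real.rpow_sub hx0, Real.rpow_one]
      ring
    rw [h2]
    have h3 : (0:ℝ) ≤ x ^ ((s-1).re) := Real.rpow_nonneg hx0.le _
    exact mul_le_mul_of_nonneg_right h1 h3

lemma cpow_s2_integral {s : ℂ} (hs : 1 < s.re) :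
    ∫ x in Ioo (0:ℝ) 1, (x:ℂ) ^ (s - 2) = 1/(s-1) := by
  rw [← MeasureTheory.integral_Ioc_eq_integral_Ioo,
    ← integral_of_le (by norm_num : (0:ℝ) ≤ 1),
    integral_cpow (Or.inl (by simp [Complex.sub_re]; linarith))]
  have h1 : s - 2 + 1 = s - 1 := by ring
  have h2 : ((1:ℝ):ℂ) = 1 := by norm_num
  have h3 : ((0:ℝ):ℂ) = 0 := by norm_num
  rw [h1, h2, h3, Complex.one_cpow, Complex.zero_cpow ?hne]
  · ring
  case hne =>
    intro h
    have := congrArg Complex.re h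
    simp [Complex.sub_re] at this
    linarith

lemma fract_integral_gt_one {s : ℂ} (hs : 1 < s.re) :
    ∫ x in Ioo (0:ℝ) 1, ((Int.fract (1/x) : ℝ):ℂ) * (x:ℂ) ^ (s-1)
      = 1/(s-1) - riemannZeta s / s := by
  have hs0 : 0 < s.re := lt_trans one_pos hs
  have hsplit : ∀ x ∈ Ioo (0:ℝ) 1,
      ((Int.fract (1/x) : ℝ):ℂ) * (x:ℂ) ^ (s-1)
        = (x:ℂ) ^ (s-2) - ((⌊1/x⌋₊ : ℝ):ℂ) * (x:ℂ) ^ (s-1) := by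
    intro x hx
    have hx0 : 0 < x := hx.1
    have hxc : (x:ℂ) ≠ 0 := by exact_mod_cast hx0.ne'
    rw [fract_one_div_eq x hx0]
    push_cast
    have h1 : (x:ℂ) ^ (s-2) = (x:ℂ)⁻¹ * (x:ℂ) ^ (s-1) := by
      have : s - 2 = (s-1) - 1 := by ring
      rw [this, Complex.cpow_sub _ _ hxc, Complex.cpow_one]
      ring
    rw [h1]
    ring
  rw [setIntegral_congr_fun measurableSet_Ioo hsplit]
  rw [MeasureTheory.integral_sub ?iA (integrableOn_floor_cpow hs)]
  · rw [cpow_s2_integral hs, floor_integral hs]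
  case iA =>
    have h := (intervalIntegrable_cpow' (a := 0) (b := 1)
      (r := s - 2) (by simp [Complex.sub_re]; linarith))
    rw [intervalIntegrable_iff_integrableOn_Ioc_of_le (by norm_num)] at h
    exact h.mono_set Ioo_subset_Ioc_self

end NBaux

namespace NBaux

noncomputable def phi (s : ℂ) : ℂ :=
  ∫ x in Ioo (0:ℝ) 1, ((Int.fract (1/x) : ℝ):ℂ) * (x:ℂ) ^ (s-1)

lemma phi_def (s : ℂ) :
    phi s = ∫ x in Ioo (0:ℝ) 1, ((Int.fract (1/x) : ℝ):ℂ) * (x:ℂ) ^ (s-1) := rfl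

noncomputable def fker : ℝ → ℂ :=
  (Ioo (0:ℝ) 1).indicator (fun x => ((Int.fract (1/x) : ℝ):ℂ))

lemma phi_eq_mellin (s : ℂ) : phi s = mellin fker s := by
  rw [phi_def, mellin]
  have h1 : (fun t : ℝ => (t:ℂ)^(s-1) • fker t)
      = fun t => (Ioo (0:ℝ) 1).indicator
          (fun x => (x:ℂ)^(s-1) • ((Int.fract (1/x) : ℝ):ℂ)) t := by
    rw [Set.indicator_smul (Ioo (0:ℝ) 1) (fun x : ℝ => (x:ℂ)^(s-1))
      (fun x => ((Int.fract (1/x) : ℝ):ℂ))]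
    rfl
  rw [h1, MeasureTheory.integral_indicator measurableSet_Ioo,
    Measure.restrict_restrict measurableSet_Ioo,
    inter_eq_left.2 (fun x hx => hx.1)]
  refine setIntegral_congr_fun measurableSet_Ioo (fun x hx => ?_)
  rw [smul_eq_mul]; ring

lemma fker_integrable : Integrable fker volume := by
  rw [fker, integrable_indicator_iff measurableSet_Ioo]
  refine Integrable.mono' (g := fun _ : ℝ => (1:ℝ)) ?_ ?_ ?_
  · exact integrableOn_const (by rw [Real.volume_Ioo]; norm_num)
  · exact ((measurable_fract_div 1).aestronglyMeasurable).restrict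
  · refine Filter.Eventually.of_forall (fun x => ?_)
    rw [Complex.norm_real, Real.norm_eq_abs, _root_.abs_of_nonneg (Int.fract_nonneg _)]
    exact (Int.fract_lt_one _).le

lemma phi_diff {s : ℂ} (hs : 0 < s.re) : DifferentiableAt ℂ phi s := by
  have h1 : DifferentiableAt ℂ (mellin fker) s := by
    refine mellin_differentiableAt_of_isBigO_rpow (a := s.re + 1) (b := 0)
      ?_ ?_ (by linarith) ?_ hs
    · exact (fker_integrable.locallyIntegrable).locallyIntegrableOn _
    · rw [Asymptotics.isBigO_iff]
      refine ⟨0, ?_⟩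
      filter_upwards [Filter.eventually_ge_atTop (1:ℝ)] with x hx
      have : fker x = 0 := by
        rw [fker, indicator_of_notMem]
        rw [mem_Ioo]; push_neg; intro; linarith
      rw [this]; simp
    · rw [Asymptotics.isBigO_iff]
      refine ⟨1, ?_⟩
      filter_upwards [self_mem_nhdsWithin] with x hx
      have hx0 : (0:ℝ) < x := hx
      rw [neg_zero, Real.rpow_zero]
      have hb : ‖fker x‖ ≤ 1 := by
        rw [fker]
        rcases Set.indicator_eq_zero_or_self _ (fun x => ((Int.fract (1/x) : ℝ):ℂ)) x with h | h
          <;> rw [h]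
        · simp
        · rw [Complex.norm_real, Real.norm_eq_abs,
            _root_.abs_of_nonneg (Int.fract_nonneg _)]
          exact (Int.fract_lt_one _).le
      simpa using hb
  have h2 : phi = mellin fker := funext phi_eq_mellin
  rw [h2]
  exact h1

noncomputable def zetaE : ℂ → ℂ :=
  Function.update (fun s => riemannZeta s - 1/(s-1)) 1
    ((Real.eulerMascheroniConstant : ℝ) : ℂ)

lemma zetaE_apply {s : ℂ} (hs : s ≠ 1) : zetaE s = riemannZeta s - 1/(s-1) :=
  Function.update_of_ne hs _ _

lemma zetaE_one : zetaE 1 = ((Real.eulerMascheroniConstant : ℝ) : ℂ) :=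
  Function.update_self _ _ _

lemma zetaE_diff_ne {s : ℂ} (hs : s ≠ 1) : DifferentiableAt ℂ zetaE s := by
  have hev : zetaE =ᶠ[nhds s] (fun w => riemannZeta w - 1/(w-1)) := by
    filter_upwards [isOpen_compl_singleton.mem_nhds (by simpa using hs)] with w hw
    exact zetaE_apply hw
  rw [hev.differentiableAt_iff]
  exact (differentiableAt_riemannZeta hs).sub
    ((differentiableAt_const _).div
      (differentiableAt_id.sub (differentiableAt_const _)) (sub_ne_zero.2 hs))

lemma zetaE_diff (s : ℂ) : DifferentiableAt ℂ zetaE s := by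
  rcases ne_or_eq s 1 with h | rfl
  · exact zetaE_diff_ne h
  refine (Complex.analyticAt_of_differentiable_on_punctured_nhds_of_continuousAt
    ?_ ?_).differentiableAt
  · filter_upwards [self_mem_nhdsWithin] with w hw
    exact zetaE_diff_ne hw
  · rw [ContinuousAt, zetaE_one, ← nhdsNE_sup_pure (1:ℂ),
      Filter.tendsto_sup]
    constructor
    · refine tendsto_riemannZeta_sub_one_div.congr' ?_
      filter_upwards [self_mem_nhdsWithin] with w hw
      exact (zetaE_apply hw).symm
    · simpa [zetaE_one] using tendsto_pure_nhds zetaE 1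

lemma phi_eq_zetaE {s : ℂ} (hs : 0 < s.re) : phi s = (1 - zetaE s) / s := by
  have hU : IsOpen {w : ℂ | 0 < w.re} := isOpen_lt continuous_const Complex.continuous_re
  have hA1 : AnalyticOnNhd ℂ phi {w : ℂ | 0 < w.re} :=
    DifferentiableOn.analyticOnNhd
      (fun w hw => (phi_diff hw).differentiableWithinAt) hU
  have hA2 : AnalyticOnNhd ℂ (fun w => (1 - zetaE w)/w) {w : ℂ | 0 < w.re} := by
    refine DifferentiableOn.analyticOnNhd
      (fun w hw => DifferentiableAt.differentiableWithinAt ?_) hU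
    refine DifferentiableAt.div
      ((differentiableAt_const _).sub (zetaE_diff w)) differentiableAt_id ?_
    intro h; rw [h] at hw; simp at hw
  have hpre : IsPreconnected {w : ℂ | 0 < w.re} :=
    (convex_halfSpace_re_gt 0).isPreconnected
  have h2 : (2:ℂ) ∈ {w : ℂ | 0 < w.re} := by norm_num
  have hev : phi =ᶠ[nhds 2] (fun w => (1 - zetaE w)/w) := by
    have hUo : IsOpen {w : ℂ | 1 < w.re} := isOpen_lt continuous_const Complex.continuous_re
    filter_upwards [hUo.mem_nhds (by norm_num : (2:ℂ) ∈ {w : ℂ | 1 < w.re})] with w hw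
    have hw1 : 1 < w.re := hw
    have hwne : w ≠ 1 := by intro h; rw [h] at hw1; simp at hw1
    have hw0 : w ≠ 0 := by intro h; rw [h] at hw1; simp at hw1; linarith
    have hws : w - 1 ≠ 0 := sub_ne_zero.2 hwne
    rw [phi_def, fract_integral_gt_one hw1, zetaE_apply hwne]
    field_simp
    ring
  exact hA1.eqOn_of_preconnected_of_eventuallyEq hA2 hpre h2 hev hs

lemma phi_val {s : ℂ} (hs : 0 < s.re) (hne : s ≠ 1) :
    phi s = 1/(s-1) - riemannZeta s / s := by
  have hs0 : s ≠ 0 := by intro h; rw [h] at hs; simp at hs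
  have hws : s - 1 ≠ 0 := sub_ne_zero.2 hne
  rw [phi_eq_zetaE hs, zetaE_apply hne]
  field_simp
  ring

end NBaux

namespace NBaux

lemma integrableOn_fract_cpow' (b : ℝ) {s : ℂ} (hs : 0 < s.re) :
    IntegrableOn (fun x : ℝ => ((Int.fract (b/x) : ℝ):ℂ) * (x:ℂ) ^ (s - 1)) (Ioc 0 1) := by
  refine Integrable.bdd_mul (integrableOn_cpow le_rfl hs)
    ((measurable_fract_div b).aestronglyMeasurable) (c := 1) (Filter.Eventually.of_forall fun x => ?_)
  rw [Complex.norm_real, Real.norm_eq_abs, _root_.abs_of_nonneg (Int.fract_nonneg _)]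
  exact (Int.fract_lt_one _).le

lemma fract_scaled {b : ℝ} (hb : b ∈ Ioo (0:ℝ) 1) {s : ℂ} (hs : 0 < s.re) (hne : s ≠ 1) :
    ∫ x in Ioo (0:ℝ) 1, ((Int.fract (b/x) : ℝ):ℂ) * (x:ℂ) ^ (s-1)
      = (b:ℂ)/(s-1) - riemannZeta s * (b:ℂ)^s / s := by
  obtain ⟨hb0, hb1⟩ := hb
  have hb0c : (b:ℂ) ≠ 0 := by exact_mod_cast hb0.ne'
  have hs1 : s - 1 ≠ 0 := sub_ne_zero.2 hne
  have hs0 : s ≠ 0 := by intro h; rw [h] at hs; simp at hs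
  set f : ℝ → ℂ := fun x => ((Int.fract (b/x) : ℝ):ℂ) * (x:ℂ) ^ (s-1) with hf
  have hI : IntegrableOn f (Ioc 0 1) := integrableOn_fract_cpow' b hs
  have hI1 : IntervalIntegrable f volume 0 b := by
    rw [intervalIntegrable_iff_integrableOn_Ioc_of_le hb0.le]
    exact hI.mono_set (Ioc_subset_Ioc_right hb1.le)
  have hI2 : IntervalIntegrable f volume b 1 := by
    rw [intervalIntegrable_iff_integrableOn_Ioc_of_le hb1.le]
    exact hI.mono_set (Ioc_subset_Ioc_left hb0.le)
  have hsplit : ∫ x in Ioo (0:ℝ) 1, f x = (∫ x in (0:ℝ)..b, f x) + ∫ x in b..(1:ℝ), f x := by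
    rw [← MeasureTheory.integral_Ioc_eq_integral_Ioo,
      ← integral_of_le (by norm_num : (0:ℝ) ≤ 1),
      intervalIntegral.integral_add_adjacent_intervals hI1 hI2]
  -- second piece
  have hsecond : ∫ x in b..(1:ℝ), f x = (b:ℂ) * ((1 - (b:ℂ)^(s-1))/(s-1)) := by
    have hcong : ∫ x in b..(1:ℝ), f x = ∫ x in b..(1:ℝ), (b:ℂ) * (x:ℂ)^(s-2) := by
      rw [integral_of_le hb1.le, integral_of_le hb1.le]
      refine setIntegral_congr_fun measurableSet_Ioc (fun x hx => ?_)
      have hx0 : 0 < x := lt_trans hb0 hx.1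
      have hxc : (x:ℂ) ≠ 0 := by exact_mod_cast hx0.ne'
      simp only [hf]
      have hfr : Int.fract (b/x) = b/x :=
        Int.fract_eq_self.2 ⟨by positivity, by rw [div_lt_one hx0]; exact hx.1⟩
      rw [hfr]
      push_cast
      have h1 : (x:ℂ) ^ (s-2) = (x:ℂ)⁻¹ * (x:ℂ) ^ (s-1) := by
        have h5 : s - 2 = (s-1) - 1 := by ring
        rw [h5, Complex.cpow_sub _ _ hxc, Complex.cpow_one]
        ring
      rw [h1]
      field_simp
    rw [hcong, intervalIntegral.integral_const_mul,
      integral_cpow (Or.inr ⟨by intro h; apply hne; linear_combination h, ?_⟩)]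
    · have h1 : s - 2 + 1 = s - 1 := by ring
      have h2 : ((1:ℝ):ℂ) = 1 := by norm_num
      rw [h1, h2, Complex.one_cpow]
    · intro hmem
      rcases Set.mem_uIcc.1 hmem with ⟨h1, -⟩ | ⟨h1, -⟩
      · exact absurd h1 (not_le.2 hb0)
      · norm_num at h1
  -- first piece via scaling
  have hfirst : ∫ x in (0:ℝ)..b, f x = (b:ℂ)^s * phi s := by
    have hsub := intervalIntegral.integral_comp_mul_right (a := 0) (b := 1) f hb0.ne'
    -- ∫ x in 0..1, f (x * b) = b⁻¹ • ∫ x in 0*b..1*b, f x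
    have h0b : (0:ℝ) * b = 0 := by ring
    have h1b : (1:ℝ) * b = b := by ring
    rw [h0b, h1b] at hsub
    have hgoal : ∫ x in (0:ℝ)..b, f x = b • ∫ x in (0:ℝ)..1, f (x * b) := by
      rw [hsub, smul_smul, mul_inv_cancel₀ hb0.ne', one_smul]
    rw [hgoal]
    have hval : ∫ x in (0:ℝ)..1, f (x * b)
        = (b:ℂ)^(s-1) * phi s := by
      rw [integral_of_le (by norm_num : (0:ℝ) ≤ 1),
        MeasureTheory.integral_Ioc_eq_integral_Ioo]
      have hcong : ∀ x ∈ Ioo (0:ℝ) 1, f (x * b)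
          = (b:ℂ)^(s-1) * (((Int.fract (1/x) : ℝ):ℂ) * (x:ℂ)^(s-1)) := by
        intro x hx
        have hx0 : 0 < x := hx.1
        simp only [hf]
        have hd : b / (x * b) = 1/x := by field_simp
        rw [hd]
        have hmul : ((x*b : ℝ):ℂ) ^ (s-1) = (x:ℂ)^(s-1) * (b:ℂ)^(s-1) := by
          push_cast
          rw [← Complex.ofReal_mul]  -- ensure form
          exact_mod_cast mul_cpow_ofReal_nonneg hx0.le hb0.le (s-1)
        rw [hmul]
        ring
      rw [setIntegral_congr_fun measurableSet_Ioo hcong,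
        MeasureTheory.integral_const_mul, ← phi_def]
    rw [hval, Complex.real_smul]
    have hbs : (b:ℂ)^s = (b:ℂ) * (b:ℂ)^(s-1) := by
      nth_rewrite 1 [show s = 1 + (s-1) by ring]
      rw [Complex.cpow_add _ _ hb0c, Complex.cpow_one]
    rw [hbs]
    ring
  rw [hsplit, hsecond, hfirst, phi_val hs hne]
  have hbs : (b:ℂ)^s = (b:ℂ) * (b:ℂ)^(s-1) := by
    nth_rewrite 1 [show s = 1 + (s-1) by ring]
    rw [Complex.cpow_add _ _ hb0c, Complex.cpow_one]
  rw [hbs]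
  field_simp
  ring

end NBaux

namespace NBaux

lemma cpow_integral_one {s : ℂ} (hs : 0 < s.re) :
    ∫ x in Ioo (0:ℝ) 1, (x:ℂ)^(s-1) = 1/s := by
  rw [← MeasureTheory.integral_Ioc_eq_integral_Ioo, cpow_Ioc_int one_pos hs]
  norm_num

end NBaux


open NBaux

/-- Beurling's sufficient condition: if `1 < p < ∞` with conjugate exponent `q`
and the Nyman–Beurling class is dense in `L^p(0,1)`, then `ζ(z) ≠ 0` for
`Re z > 1/p`. -/
theorem nb_dense_Lp_imp_zero_free (p q : ℝ) (hp : 1 < p) (hq : 1 / p + 1 / q = 1)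
    (hdense : ∀ g : ℝ → ℝ, MemLp g (ENNReal.ofReal p) (volume.restrict (Ioo (0:ℝ) 1)) →
      ∀ ε > (0:ℝ), ∃ (m : ℕ) (c β : Fin m → ℝ), 1 ≤ m ∧
        (∀ i, β i ∈ Ioo (0:ℝ) 1) ∧ (∑ i, c i * β i = 0) ∧
        eLpNorm (fun x => g x - ∑ i, c i * Int.fract (β i / x)) (ENNReal.ofReal p)
            (volume.restrict (Ioo (0:ℝ) 1)) < ENNReal.ofReal ε)
    (z : ℂ) (hz : 1 / p < z.re) :
    riemannZeta z ≠ 0 := by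
  intro hzeta
  rcases eq_or_ne z 1 with rfl | hz1
  · exact riemannZeta_one_ne_zero hzeta
  have hp0 : 0 < p := lt_trans one_pos hp
  have hip : 0 < 1/p := by positivity
  have hzre : 0 < z.re := lt_trans hip hz
  have hz0 : z ≠ 0 := fun h => by rw [h] at hzre; simp at hzre
  have hip1 : 1/p < 1 := by rw [div_lt_one hp0]; exact hp
  have hq0 : 0 < q := by
    have h1 : 0 < 1/q := by linarith
    exact one_div_pos.1 h1
  set μ := volume.restrict (Ioo (0:ℝ) 1) with hμ
  haveI : IsFiniteMeasure μ :=
    ⟨by rw [hμ, Measure.restrict_apply_univ, Real.volume_Ioo]; norm_num⟩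
  have hexp : (-1:ℝ) < (z.re - 1) * q := by
    have h1 : 1/p - 1 = -(1/q) := by linarith
    have h2 : (1/p - 1) * q = -1 := by
      rw [h1, one_div, neg_mul, inv_mul_cancel₀ hq0.ne']
    have h3 : (1/p - 1) * q < (z.re - 1) * q :=
      mul_lt_mul_of_pos_right (by linarith) hq0
    linarith
  set B : ENNReal :=
    (∫⁻ x in Ioo (0:ℝ) 1, (ENNReal.ofReal (x ^ (z.re - 1)))^q) ^ (1/q) with hB
  have hBfin : B ≠ ⊤ := by
    have hw : IntegrableOn (fun x : ℝ => x ^ ((z.re - 1) * q)) (Ioo 0 1) := by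
      have h := intervalIntegral.intervalIntegrable_rpow' (a := 0) (b := 1) hexp
      rw [intervalIntegrable_iff_integrableOn_Ioc_of_le (by norm_num)] at h
      exact h.mono_set Ioo_subset_Ioc_self
    have hcong : ∀ᵐ x ∂μ, (ENNReal.ofReal (x ^ (z.re - 1)))^q
        = (‖x ^ ((z.re - 1) * q)‖₊ : ENNReal) := by
      rw [hμ, MeasureTheory.ae_restrict_iff' measurableSet_Ioo]
      refine Filter.Eventually.of_forall (fun x hx => ?_)
      rw [ENNReal.ofReal_rpow_of_nonneg (Real.rpow_nonneg hx.1.le _) hq0.le,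
        ← Real.rpow_mul hx.1.le]
      exact (Real.enorm_eq_ofReal (Real.rpow_nonneg hx.1.le _)).symm
    have hlt : (∫⁻ x in Ioo (0:ℝ) 1, (ENNReal.ofReal (x ^ (z.re - 1)))^q) < ⊤ := by
      rw [show (∫⁻ x in Ioo (0:ℝ) 1, (ENNReal.ofReal (x ^ (z.re - 1)))^q)
          = ∫⁻ x, (ENNReal.ofReal (x ^ (z.re - 1)))^q ∂μ from rfl,
        lintegral_congr_ae hcong]
      exact hw.2
    rw [hB]
    exact ENNReal.rpow_ne_top_of_nonneg (by positivity) hlt.ne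
  set Cr := B.toReal with hCr
  have hCr0 : 0 ≤ Cr := ENNReal.toReal_nonneg
  have habs : 0 < (‖z‖)⁻¹ := inv_pos.2 (norm_pos_iff.mpr hz0)
  set ε : ℝ := (‖z‖)⁻¹ / (2 * (Cr + 1)) with hεdef
  have hε : 0 < ε := div_pos habs (by positivity)
  obtain ⟨m, c, β, hm1, hβ, hsum0, hlt⟩ := hdense (fun _ => (1:ℝ)) (memLp_const 1) ε hε
  set h : ℝ → ℝ := fun x => (fun _ => (1:ℝ)) x - ∑ i, c i * Int.fract (β i / x) with hh
  have hmeash : Measurable h := by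
    refine Measurable.sub measurable_const ?_
    exact Finset.measurable_sum Finset.univ
      (fun i _ => ((measurable_const.div measurable_id).fract).const_mul (c i))
  -- value of the integral
  have hIval : ∫ x in Ioo (0:ℝ) 1, ((h x : ℝ):ℂ) * (x:ℂ)^(z-1) = 1/z := by
    have hcong : ∀ x ∈ Ioo (0:ℝ) 1, ((h x : ℝ):ℂ) * (x:ℂ)^(z-1)
        = (x:ℂ)^(z-1) - ∑ i, (c i : ℂ) *
            (((Int.fract (β i / x) : ℝ):ℂ) * (x:ℂ)^(z-1)) := by
      intro x hx
      simp only [hh]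
      push_cast
      rw [sub_mul, one_mul, Finset.sum_mul]
      simp_rw [mul_assoc]
    rw [setIntegral_congr_fun measurableSet_Ioo hcong]
    have hA : IntegrableOn (fun x : ℝ => (x:ℂ)^(z-1)) (Ioo 0 1) :=
      (integrableOn_cpow le_rfl hzre).mono_set Ioo_subset_Ioc_self
    have hS : IntegrableOn (fun x : ℝ => ∑ i, (c i : ℂ) *
        (((Int.fract (β i / x) : ℝ):ℂ) * (x:ℂ)^(z-1))) (Ioo 0 1) :=
      integrable_finset_sum _
        (fun i _ => (integrableOn_fract_cpow (β i) hzre).const_mul _)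
    rw [MeasureTheory.integral_sub hA hS,
      MeasureTheory.integral_finset_sum _
        (fun i _ => (integrableOn_fract_cpow (β i) hzre).const_mul _)]
    have hterm : ∀ i, (∫ x in Ioo (0:ℝ) 1, (c i : ℂ) *
          (((Int.fract (β i / x):ℝ):ℂ) * (x:ℂ)^(z-1)))
        = (c i : ℂ) * ((β i : ℂ)/(z-1)) := by
      intro i
      rw [MeasureTheory.integral_const_mul, fract_scaled (hβ i) hzre hz1, hzeta]
      ring
    rw [Finset.sum_congr rfl (fun i _ => hterm i), cpow_integral_one hzre]
    have hsz : ∑ i, (c i:ℂ) * ((β i:ℂ)/(z-1)) = (∑ i, (c i:ℂ) * (β i:ℂ)) / (z-1) := by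
      rw [Finset.sum_div]
      exact Finset.sum_congr rfl (fun i _ => by ring)
    rw [hsz]
    have hzero : (∑ i, (c i:ℂ) * (β i:ℂ)) = 0 := by
      have hcast := congrArg (fun r : ℝ => (r:ℂ)) hsum0
      push_cast at hcast
      simpa using hcast
    rw [hzero]
    simp
  -- Hölder
  have key : (ENNReal.ofReal (‖z‖)⁻¹) ≤ ENNReal.ofReal ε * B := by
    have h1 : ((‖(1/z : ℂ)‖₊ : ENNReal))
        ≤ ∫⁻ x, (‖((h x:ℝ):ℂ) * (x:ℂ)^(z-1)‖₊ : ENNReal) ∂μ := by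
      rw [← hIval]
      exact enorm_integral_le_lintegral_enorm _
    have h2 : ∫⁻ x, (‖((h x:ℝ):ℂ) * (x:ℂ)^(z-1)‖₊ : ENNReal) ∂μ
        = ∫⁻ x, ((fun x => (‖h x‖₊ : ENNReal)) *
            (fun x : ℝ => ENNReal.ofReal (x ^ (z.re - 1)))) x ∂μ := by
      refine lintegral_congr_ae ?_
      filter_upwards [MeasureTheory.ae_restrict_mem (μ := volume)
        (s := Ioo (0:ℝ) 1) measurableSet_Ioo] with x hx
      simp only [Pi.mul_apply]
      rw [nnnorm_mul, ENNReal.coe_mul, Complex.nnnorm_real]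
      congr 1
      rw [← enorm_eq_nnnorm, ← ofReal_norm, norm_cpow_of_pos hx.1]
    have h3 := ENNReal.lintegral_mul_le_Lp_mul_Lq μ
      ((Real.holderConjugate_iff (q := q)).mpr ⟨hp, by rw [← one_div, ← one_div]; exact hq⟩)
      (f := fun x => (‖h x‖₊ : ENNReal))
      (g := fun x : ℝ => ENNReal.ofReal (x ^ (z.re - 1)))
      (hmeash.nnnorm.coe_nnreal_ennreal.aemeasurable) (by fun_prop)
    have h4 : (∫⁻ x, ((‖h x‖₊ : ENNReal)) ^ p ∂μ) ^ (1/p)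
        = eLpNorm h (ENNReal.ofReal p) μ := by
      rw [MeasureTheory.eLpNorm_eq_lintegral_rpow_enorm_toReal
        (by rw [Ne, ENNReal.ofReal_eq_zero]; linarith) ENNReal.ofReal_ne_top,
        ENNReal.toReal_ofReal hp0.le]
      rfl
    calc ENNReal.ofReal (‖z‖)⁻¹
        = ((‖(1/z:ℂ)‖₊ : ENNReal)) := by
          rw [← enorm_eq_nnnorm, ← ofReal_norm, norm_div, norm_one, one_div]
      _ ≤ ∫⁻ x, (‖((h x:ℝ):ℂ) * (x:ℂ)^(z-1)‖₊ : ENNReal) ∂μ := h1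
      _ = ∫⁻ x, ((fun x => (‖h x‖₊ : ENNReal)) *
            (fun x : ℝ => ENNReal.ofReal (x ^ (z.re - 1)))) x ∂μ := h2
      _ ≤ (∫⁻ x, ((‖h x‖₊ : ENNReal)) ^ p ∂μ) ^ (1/p) *
            (∫⁻ x, (ENNReal.ofReal (x ^ (z.re - 1)))^q ∂μ) ^ (1/q) := h3
      _ = eLpNorm h (ENNReal.ofReal p) μ * B := by rw [h4, hB]
      _ ≤ ENNReal.ofReal ε * B := mul_le_mul_left hlt.le _
  -- numeric contradiction
  have hfin : ENNReal.ofReal ε * B ≤ ENNReal.ofReal (ε * Cr) := by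
    conv_lhs => rw [← ENNReal.ofReal_toReal hBfin]
    rw [← ENNReal.ofReal_mul hε.le]
  have hle : (‖z‖)⁻¹ ≤ ε * Cr :=
    (ENNReal.ofReal_le_ofReal_iff (by positivity)).1 (key.trans hfin)
  have hεC : ε * Cr = (‖z‖)⁻¹ * Cr / (2 * (Cr + 1)) := by
    rw [hεdef]; ring
  rw [hεC] at hle
  have h2 := (le_div_iff₀ (by positivity : (0:ℝ) < 2 * (Cr + 1))).1 hle
  nlinarith
end
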